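/- Let τ be a real number and let 0 < ε < 1. Then ∫₁^{1/ε²} ∫_{ε/x}^{ε} (x y)^{1−τ} (1 − e^{−x y}) dy dx = log(1/ε) ∫_ε^{1/ε} u^{1−τ}(1 − e^{−u}) du + ∫_ε^{1/ε} log(1/u) · u^{1−τ}(1 − e^{−u}) du. -/

import Mathlib

open MeasureTheory intervalIntegral

/-- Substitution identity (`u = xy`) from the paper's Lemma 4.7 (Range II). -/
theorem stmt_12 (τ ε : ℝ) (hε0 : 0 < ε) (hε1 : ε < 1) :
    (∫ x in (1 : ℝ)..(1 / ε ^ 2), ∫ y in (ε / x)..ε,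
        (x * y) ^ (1 - τ) * (1 - Real.exp (-(x * y))))
    = Real.log (1 / ε) * (∫ u in ε..(1 / ε), u ^ (1 - τ) * (1 - Real.exp (-u)))
      + ∫ u in ε..(1 / ε), Real.log (1 / u) * (u ^ (1 - τ) * (1 - Real.exp (-u))) := by
  set T : ℝ := 1 / ε ^ 2 with hTdef
  set f : ℝ → ℝ := fun u => u ^ (1 - τ) * (1 - Real.exp (-u)) with hf
  have hεne : ε ≠ 0 := hε0.ne'
  have hεinv : ε < 1 / ε := by
    rw [lt_div_iff₀ hε0]
    nlinarith
  have hT1 : (1 : ℝ) < T := by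
    rw [hTdef, lt_div_iff₀ (by positivity)]
    nlinarith
  have hεT : ε * T = 1 / ε := by
    rw [hTdef]; field_simp
  -- continuity of f at positive points
  have hfc : ∀ u : ℝ, 0 < u → ContinuousAt f u := by
    intro u hu
    exact ((Real.continuousAt_rpow_const u _ (Or.inl hu.ne')).mul
      ((continuousAt_const.sub ((Real.continuous_exp.continuousAt).comp
        (continuousAt_id.neg)))))
  have hfm : Measurable f := by fun_prop
  have hfcOn : ∀ a b : ℝ, 0 < a → ContinuousOn f (Set.uIcc a b) → True := fun _ _ _ _ => trivial
  have hfint : ∀ a b : ℝ, 0 < a → 0 < b → IntervalIntegrable f volume a b := by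
    intro a b ha hb
    apply ContinuousOn.intervalIntegrable
    intro u hu
    have hu0 : 0 < u := lt_of_lt_of_le (lt_min ha hb) hu.1
    exact (hfc u hu0).continuousWithinAt
  set F : ℝ → ℝ := fun t => ∫ u in ε..t, f u with hF
  -- Step 1: inner substitution u = x * y
  have hinner : Set.EqOn
      (fun x => ∫ y in (ε / x)..ε, (x * y) ^ (1 - τ) * (1 - Real.exp (-(x * y))))
      (fun x => F (ε * x) * x⁻¹) (Set.uIcc 1 T) := by
    intro x hx
    rw [Set.uIcc_of_le hT1.le] at hx
    have hx0 : 0 < x := lt_of_lt_of_le one_pos hx.1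
    have : (∫ y in (ε / x)..ε, f (x * y)) = x⁻¹ • ∫ u in x * (ε / x)..x * ε, f u :=
      integral_comp_mul_left f hx0.ne'
    show (∫ y in (ε / x)..ε, (x * y) ^ (1 - τ) * (1 - Real.exp (-(x * y)))) = F (ε * x) * x⁻¹
    simp only [hf] at this
    rw [this, mul_div_cancel₀ _ hx0.ne', mul_comm x ε]
    simp [hF, mul_comm, smul_eq_mul]
    exact Or.inl rfl
  rw [intervalIntegral.integral_congr hinner]
  -- Step 2: integration by parts with v = log
  have hu : ∀ x ∈ Set.uIcc (1 : ℝ) T, HasDerivAt (fun x => F (ε * x)) (ε * f (ε * x)) x := by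
    intro x hx
    rw [Set.uIcc_of_le hT1.le] at hx
    have hx0 : 0 < x := lt_of_lt_of_le one_pos hx.1
    have hεx : 0 < ε * x := by positivity
    have hFd : HasDerivAt F (f (ε * x)) (ε * x) :=
      intervalIntegral.integral_hasDerivAt_right (hfint _ _ hε0 hεx)
        hfm.aestronglyMeasurable.stronglyMeasurableAtFilter (hfc _ hεx)
    have hg : HasDerivAt (fun y : ℝ => ε * y) ε x := by
      simpa using (hasDerivAt_id x).const_mul ε
    have := hFd.comp x hg
    rw [show ε * f (ε * x) = f (ε * x) * ε from mul_comm _ _]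
    exact this
  have hv : ∀ x ∈ Set.uIcc (1 : ℝ) T, HasDerivAt Real.log x⁻¹ x := by
    intro x hx
    rw [Set.uIcc_of_le hT1.le] at hx
    exact Real.hasDerivAt_log (by linarith [hx.1])
  have hu' : IntervalIntegrable (fun x => ε * f (ε * x)) volume 1 T := by
    apply ContinuousOn.intervalIntegrable
    intro x hx
    rw [Set.uIcc_of_le hT1.le] at hx
    have hx0 : 0 < x := lt_of_lt_of_le one_pos hx.1
    exact (continuousAt_const.mul ((hfc (ε * x) (mul_pos hε0 hx0)).comp
      (continuousAt_const.mul continuousAt_id))).continuousWithinAt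
  have hv' : IntervalIntegrable (fun x : ℝ => x⁻¹) volume 1 T := by
    apply ContinuousOn.intervalIntegrable
    intro x hx
    rw [Set.uIcc_of_le hT1.le] at hx
    exact (continuousAt_inv₀ (by linarith [hx.1])).continuousWithinAt
  rw [intervalIntegral.integral_mul_deriv_eq_deriv_mul hu hv hu' hv']
  -- Step 3: substitution u = ε * x in remaining integral
  have hsub : (∫ x in (1 : ℝ)..T, ε * f (ε * x) * Real.log x)
      = ∫ u in ε..(1 / ε), f u * Real.log (u / ε) := by
    have hpt : ∀ x : ℝ, ε * f (ε * x) * Real.log x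
        = ε • ((fun u => f u * Real.log (u / ε)) (ε * x)) := by
      intro x
      simp only [smul_eq_mul]
      rw [mul_div_cancel_left₀ _ hεne]
      ring
    simp_rw [hpt]
    rw [intervalIntegral.integral_smul,
      intervalIntegral.smul_integral_comp_mul_left (fun u => f u * Real.log (u / ε)) ε,
      mul_one, hεT]
  rw [hsub]
  -- Step 4: algebra
  have hIsub : (∫ u in ε..(1 / ε), f u * Real.log (u / ε))
      = (∫ u in ε..(1 / ε), Real.log u * f u)
        - Real.log ε * ∫ u in ε..(1 / ε), f u := by
    have heq : Set.EqOn (fun u => f u * Real.log (u / ε))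
        (fun u => Real.log u * f u - Real.log ε * f u) (Set.uIcc ε (1 / ε)) := by
      intro u hu
      rw [Set.uIcc_of_le hεinv.le] at hu
      have hu0 : 0 < u := lt_of_lt_of_le hε0 hu.1
      simp only
      rw [Real.log_div hu0.ne' hεne]
      ring
    rw [intervalIntegral.integral_congr heq, intervalIntegral.integral_sub,
      intervalIntegral.integral_const_mul]
    · apply ContinuousOn.intervalIntegrable
      intro u hu
      rw [Set.uIcc_of_le hεinv.le] at hu
      have hu0 : 0 < u := lt_of_lt_of_le hε0 hu.1
      exact ((Real.continuousAt_log hu0.ne').mul (hfc u hu0)).continuousWithinAt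
    · exact (hfint _ _ hε0 (by positivity)).const_mul _
  rw [hIsub]
  have hlogT : Real.log T = -(2 * Real.log ε) := by
    rw [hTdef, one_div, Real.log_inv, Real.log_pow]
    push_cast; ring
  have hRHS2 : (∫ u in ε..(1 / ε), Real.log (1 / u) * f u)
      = -∫ u in ε..(1 / ε), Real.log u * f u := by
    rw [← intervalIntegral.integral_neg]
    congr 1
    funext u
    rw [one_div, Real.log_inv]
    ring
  rw [hRHS2, hεT, mul_one, hF]
  simp only [intervalIntegral.integral_same, hlogT, Real.log_one,
    one_div, Real.log_inv]
  ring
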